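/- Let E be an infinite field, E^sep a separable closure of E, and F ⊆ E^sep a finite extension of E. Let σ₁, …, σ_k : F → E^sep be a finite sequence of mutually distinct E-embeddings (E-algebra homomorphisms) of F into E^sep. Then the set {(σ₁(x), …, σ_k(x)) : x ∈ F} is Zariski-dense in affine k-space over E^sep; that is, every polynomial f in k variables with coefficients in E^sep that vanishes at (σ₁(x), …, σ_k(x)) for every x ∈ F is the zero polynomial. -/

import Mathlib

open MvPolynomial

lemma evalE_zero {E Esep : Type} [Field E] [Infinite E] [Field Esep] [Algebra E Esep]
    {n : ℕ} (g : MvPolynomial (Fin n) Esep)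
    (h : ∀ c : Fin n → E, MvPolynomial.eval (fun j => algebraMap E Esep (c j)) g = 0) :
    g = 0 := by
  classical
  set B := Module.Basis.ofVectorSpace E Esep with hB
  set gt : (Module.Basis.ofVectorSpaceIndex E Esep) → MvPolynomial (Fin n) E :=
    fun t => ∑ m ∈ g.support, monomial m (B.repr (coeff m g) t) with hgt
  have hcoeff : ∀ t m', coeff m' (gt t) = B.repr (coeff m' g) t := by
    intro t m'
    rw [hgt]
    simp only [coeff_sum, coeff_monomial]
    rw [Finset.sum_ite_eq' g.support m' (fun m => B.repr (coeff m g) t)]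
    split
    · rfl
    · next hm => rw [notMem_support_iff.mp hm, map_zero, Finsupp.zero_apply]
  have key : ∀ (c : Fin n → E) t,
      MvPolynomial.eval c (gt t) = B.repr (MvPolynomial.eval (fun j => algebraMap E Esep (c j)) g) t := by
    intro c t
    rw [MvPolynomial.eval_eq (fun j => algebraMap E Esep (c j)) g]
    have : ∀ m : Fin n →₀ ℕ,
        coeff m g * ∏ i ∈ m.support, (algebraMap E Esep (c i)) ^ m i
          = (∏ i ∈ m.support, c i ^ m i) • coeff m g := by
      intro m
      rw [Algebra.smul_def, mul_comm, map_prod]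
      simp [map_pow]
    simp_rw [this]
    have lhs : MvPolynomial.eval c (gt t)
        = ∑ m ∈ g.support, (B.repr (coeff m g) t) * ∏ i ∈ m.support, c i ^ m i := by
      rw [hgt, map_sum]
      exact Finset.sum_congr rfl fun m _ => by rw [eval_monomial, Finsupp.prod]
    rw [lhs, map_sum, Finsupp.finset_sum_apply]
    exact Finset.sum_congr rfl fun m _ => by
      rw [map_smul, Finsupp.smul_apply, smul_eq_mul]; ring
  have hgt0 : ∀ t, gt t = 0 := by
    intro t
    apply MvPolynomial.funext (q := 0)
    intro c
    simp [key c t, h c]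
  ext m
  rw [coeff_zero]
  have : B.repr (coeff m g) = 0 := by
    ext t
    rw [← hcoeff t m, hgt0 t, coeff_zero, Finsupp.zero_apply]
  simpa using congrArg (B.repr.symm) this


theorem stmt4 (E : Type) [Field E] [Infinite E]
    (Esep : Type) [Field Esep] [Algebra E Esep] [IsSepClosure E Esep]
    (F : IntermediateField E Esep) [FiniteDimensional E F]
    (k : ℕ) (σ : Fin k → (F →ₐ[E] Esep)) (hσ : Function.Injective σ)
    (f : MvPolynomial (Fin k) Esep)
    (hf : ∀ x : F, MvPolynomial.eval (fun i => σ i x) f = 0) :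
    f = 0 := by
  classical
  set n := Module.finrank E F with hn
  set b := Module.finBasis E F with hb
  set M : Matrix (Fin k) (Fin n) Esep := Matrix.of fun i j => σ i (b j) with hM
  have hrows : LinearIndependent Esep (fun i => M i) := by
    have hli : LinearIndependent Esep (fun i => (σ i).toLinearMap) :=
      (linearIndependent_algHom_toLinearMap E F Esep).comp σ hσ
    rw [Fintype.linearIndependent_iff] at hli ⊢
    intro lam hlam
    apply hli lam
    refine b.ext fun j => ?_
    simp only [LinearMap.coe_sum, Finset.sum_apply, LinearMap.smul_apply,
      AlgHom.toLinearMap_apply, LinearMap.zero_apply]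
    have h0 := congrFun hlam j
    simpa [hM] using h0
  have hinj : Function.Injective (Matrix.vecMulLinear M) := by
    rw [Matrix.coe_vecMulLinear]
    exact Matrix.vecMul_injective_iff.mpr hrows
  obtain ⟨G, hG⟩ := (Matrix.vecMulLinear M).exists_leftInverse_of_injective
    (LinearMap.ker_eq_bot.mpr hinj)
  set N : Matrix (Fin n) (Fin k) Esep := Matrix.of fun j l => G (Pi.single j 1) l with hN
  have hMN : M * N = 1 := by
    ext i l
    have h1 : G (fun j => M i j) = Pi.single i 1 := by
      have h2 := LinearMap.congr_fun hG (Pi.single i (1 : Esep))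
      simp only [LinearMap.comp_apply, LinearMap.id_apply, Matrix.vecMulLinear_apply] at h2
      have h3 : Matrix.vecMul (Pi.single i (1 : Esep)) M = fun j => M i j := by
        funext j
        rw [Matrix.vecMul, single_dotProduct, one_mul]
      rwa [h3] at h2
    have h4 : (fun j => M i j) = ∑ j, M i j • (Pi.single j 1 : Fin n → Esep) := by
      rw [pi_eq_sum_univ (fun j => M i j)]
      refine Finset.sum_congr rfl fun j _ => ?_
      congr 1
      funext j'
      rw [Pi.single_apply]
      simp [eq_comm]
    calc (M * N) i l = ∑ j, M i j * N j l := Matrix.mul_apply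
      _ = (G (fun j => M i j)) l := by
          rw [h4, map_sum]
          simp [hN, Finset.sum_apply]
      _ = (Pi.single i 1 : Fin k → Esep) l := by rw [h1]
      _ = (1 : Matrix (Fin k) (Fin k) Esep) i l := by
          simp [Matrix.one_apply, Pi.single_apply, eq_comm]
  have e2a : ∀ {τ : Type} (y : τ → Esep) (p : MvPolynomial τ Esep),
      MvPolynomial.eval y p = MvPolynomial.aeval y p := by
    intro τ y p
    rw [MvPolynomial.aeval_def, Algebra.algebraMap_self]
    rfl
  set φv : Fin k → MvPolynomial (Fin n) Esep := fun i => ∑ j, M i j • X j with hφv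
  set ψv : Fin n → MvPolynomial (Fin k) Esep := fun j => ∑ l, N j l • X l with hψv
  have hg : aeval φv f = 0 := by
    apply evalE_zero (E := E)
    intro c
    set x : F := ∑ j, c j • b j with hx
    have hpt : ∀ i, MvPolynomial.eval (fun j => algebraMap E Esep (c j)) (φv i) = σ i x := by
      intro i
      rw [hφv, hx, map_sum, map_sum (σ i)]
      refine Finset.sum_congr rfl fun j _ => ?_
      rw [MvPolynomial.smul_eval, eval_X, Algebra.smul_def, map_mul, AlgHom.commutes, mul_comm]
      rfl
    rw [e2a, ← AlgHom.comp_apply, MvPolynomial.comp_aeval]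
    have : (fun i => aeval (fun j => algebraMap E Esep (c j)) (φv i)) = fun i => σ i x := by
      funext i
      rw [← e2a, hpt i]
    rw [this, ← e2a]
    exact hf x
  have hXi : ∀ i, aeval ψv (φv i) = X i := by
    intro i
    rw [hφv]
    rw [map_sum]
    simp_rw [map_smul, aeval_X, hψv, Finset.smul_sum, smul_smul]
    rw [Finset.sum_comm]
    simp_rw [← Finset.sum_smul, ← Matrix.mul_apply, hMN]
    simp [Matrix.one_apply]
  have : aeval ψv (aeval φv f) = f := by
    rw [← AlgHom.comp_apply, MvPolynomial.comp_aeval]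
    have h5 : (fun i => aeval ψv (φv i)) = X := funext hXi
    rw [h5]
    simp [aeval_X_left]
  rw [← this, hg, map_zero]
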